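/- Let n ≥ 2 and let a, b, t be the unique integers with t ≥ 2, 1 ≤ a ≤ b ≤ f_t, and n = a·f_t + b·f_{t-1}. If t is even, then a·f_{t+1} + b·f_t = ⌊φ·n⌋, and if t is odd, then a·f_{t+1} + b·f_t = ⌈φ·n⌉, where φ = (1+√5)/2. -/

import Mathlib

open goldenRatio

noncomputable def phi : ℝ := (1 + Real.sqrt 5) / 2

theorem stmt8 (n : ℤ) (hn : 2 ≤ n) (a b : ℤ) (t : ℕ) (ht : 2 ≤ t)
    (ha : 1 ≤ a) (hab : a ≤ b) (hb : b ≤ (Nat.fib t : ℤ))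
    (hdec : n = a * (Nat.fib t : ℤ) + b * (Nat.fib (t - 1) : ℤ)) :
    (Even t → a * (Nat.fib (t + 1) : ℤ) + b * (Nat.fib t : ℤ) = ⌊phi * (n : ℝ)⌋) ∧
    (Odd t → a * (Nat.fib (t + 1) : ℤ) + b * (Nat.fib t : ℤ) = ⌈phi * (n : ℝ)⌉) := by
  have hphi : phi = φ := rfl
  obtain ⟨s, rfl⟩ := Nat.exists_eq_add_of_le ht
  rw [show 2 + s = s + 1 + 1 by omega] at hb hdec ⊢
  set k := s + 1 with hk
  have hk1 : 1 ≤ k := by omega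
  -- real setup
  set u : ℝ := -ψ with hu
  have hu0 : 0 < u := by unfold u; linarith [Real.goldenConj_neg]
  have hu1 : u < 1 := by unfold u; linarith [Real.neg_one_lt_goldenConj]
  have huφ : u * φ = 1 := by unfold u; nlinarith [Real.goldenConj_mul_goldenRatio]
  have hsum : φ + u = Real.sqrt 5 := by unfold u; linarith [Real.goldenRatio_sub_goldenConj]
  have h5 : (0:ℝ) < Real.sqrt 5 := by positivity
  -- key identity
  have h1 := Real.fib_succ_sub_goldenRatio_mul_fib (k + 1)
  have h2 := Real.fib_succ_sub_goldenRatio_mul_fib k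
  set m : ℤ := a * (Nat.fib (k + 1 + 1) : ℤ) + b * (Nat.fib (k + 1) : ℤ) with hm
  rw [show k + 1 - 1 = k from rfl] at hdec
  have key : phi * (n : ℝ) = (m : ℝ) - ψ ^ k * ((a : ℝ) * ψ + b) := by
    rw [hphi, hdec, hm]
    push_cast
    have hp : (ψ:ℝ) ^ (k + 1) = ψ ^ k * ψ := pow_succ ψ k
    linear_combination (-(a:ℝ)) * h1 - (b:ℝ) * h2 - (a:ℝ) * hp
  -- bound on D
  set D : ℝ := (a : ℝ) * ψ + b with hD
  have hD0 : 0 < D := by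
    have hb1 : (1:ℝ) ≤ (b:ℝ) := by exact_mod_cast ha.trans hab
    have : (a:ℝ) ≤ (b:ℝ) := by exact_mod_cast hab
    unfold D u at *
    nlinarith
  have hDlt : D < (Nat.fib (k+1) : ℝ) := by
    have hbf : (b:ℝ) ≤ (Nat.fib (k+1) : ℝ) := by exact_mod_cast hb
    have ha' : (1:ℝ) ≤ (a:ℝ) := by exact_mod_cast ha
    unfold D u at *
    nlinarith
  -- bound E := u^k * D < 1
  have hupow : 0 < u ^ k := pow_pos hu0 k
  have hE0 : 0 < u ^ k * D := mul_pos hupow hD0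
  have hfib : (Nat.fib (k+1) : ℝ) = (φ ^ (k+1) - ψ ^ (k+1)) / Real.sqrt 5 :=
    Real.coe_fib_eq (k+1)
  have hukphi : u ^ k * φ ^ (k+1) = φ := by
    have : u ^ k * φ ^ k = 1 := by rw [← mul_pow, huφ, one_pow]
    calc u ^ k * φ ^ (k+1) = (u ^ k * φ ^ k) * φ := by ring
    _ = φ := by rw [this, one_mul]
  have habs : |ψ ^ (k+1)| = u ^ (k+1) := by
    rw [abs_pow, abs_of_neg Real.goldenConj_neg]
  have hpsib : -ψ ^ (k+1) ≤ u ^ (k+1) := by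
    calc -ψ ^ (k+1) ≤ |ψ ^ (k+1)| := neg_le_abs _
    _ = u ^ (k+1) := habs
  have hsmall : u ^ k * u ^ (k+1) < u := by
    have : u ^ k * u ^ (k+1) = u ^ (2*k+1) := by rw [← pow_add]; ring_nf
    rw [this]
    calc u ^ (2*k+1) ≤ u ^ 2 := by
          apply pow_le_pow_of_le_one hu0.le hu1.le; omega
    _ < u := by nlinarith
  have hE1 : u ^ k * D < 1 := by
    have step1 : u ^ k * D < u ^ k * (Nat.fib (k+1) : ℝ) :=
      (mul_lt_mul_iff_right₀ hupow).mpr hDlt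
    have step2 : u ^ k * (Nat.fib (k+1) : ℝ) = (φ - u ^ k * ψ ^ (k+1)) / Real.sqrt 5 := by
      rw [hfib, ← mul_div_assoc, mul_sub, hukphi]
    have step3 : u ^ k * (-ψ ^ (k+1)) ≤ u ^ k * u ^ (k+1) :=
      mul_le_mul_of_nonneg_left hpsib hupow.le
    have e : u ^ k * (-ψ ^ (k+1)) = -(u ^ k * ψ ^ (k+1)) := by ring
    have : (φ - u ^ k * ψ ^ (k+1)) / Real.sqrt 5 < 1 := by
      rw [div_lt_one h5, ← hsum]
      linarith [step3, hsmall, e]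
    rw [step2] at step1
    exact step1.trans this
  constructor
  · intro hev
    have hkodd : Odd k := by
      rcases hev with ⟨c, hc⟩; exact ⟨c - 1, by omega⟩
    have hψk : (ψ:ℝ) ^ k = -(u ^ k) := by
      have : (ψ:ℝ) = -u := by unfold u; ring
      rw [this, hkodd.neg_pow]
    rw [hψk] at key
    have hkey' : phi * (n:ℝ) = (m:ℝ) + u ^ k * D := by rw [key]; ring
    symm
    rw [Int.floor_eq_iff]
    exact ⟨by linarith [hE0, hkey'], by linarith [hE1, hkey']⟩
  · intro hod
    have hkev : Even k := by
      rcases hod with ⟨c, hc⟩; exact ⟨c, by omega⟩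
    have hψk : (ψ:ℝ) ^ k = u ^ k := by
      have : (ψ:ℝ) = -u := by unfold u; ring
      rw [this, hkev.neg_pow]
    rw [hψk] at key
    symm
    rw [Int.ceil_eq_iff]
    exact ⟨by push_cast; linarith [hE1, key], by linarith [hE0, key]⟩
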